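/- Let F be a finite field with f elements and of characteristic ≠ 2, V a 2-dimensional F-vector space, q : V → F a non-degenerate quadratic form, and a ∈ F with a ≠ 0. Set k = f + 1 if q is anisotropic and k = f − 1 if q is isotropic. Then the sumset V_a + V_a = {u + v : q(u) = a, q(v) = a} has cardinality k²/2 + 1. -/

import Mathlib

open QuadraticMap Module

set_option linter.unusedSectionVars false

section AuxCounting

open Finset

variable {F : Type*} [Field F] [Fintype F] [DecidableEq F]

-- L1: sqrt count
lemma aux_sqrt_count (hchar : ringChar F ≠ 2) (d : F) :
    ((univ.filter fun t : F => t * t = d).card : ℤ) = quadraticChar F d + 1 := by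
  have h := quadraticChar_card_sqrts hchar d
  rw [← h]
  congr 1
  rw [Set.toFinset_setOf]
  congr 1
  ext t
  simp [_root_.sq]

-- L2
lemma aux_hyperbola_count (hchar : ringChar F ≠ 2) {b : F} (hb : b ≠ 0) :
    (univ.filter fun p : F × F => p.1 * p.1 - p.2 * p.2 = b).card
      = Fintype.card F - 1 := by
  have h2 : (2 : F) ≠ 0 := Ring.two_ne_zero hchar
  have : (univ.filter fun p : F × F => p.1 * p.1 - p.2 * p.2 = b).card
      = (univ.filter fun d : F => d ≠ 0).card := by
    apply Finset.card_bij' (fun p _ => p.1 + p.2)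
      (fun d _ => ((d + b / d) / 2, (d - b / d) / 2))
    · intro p hp
      simp only [mem_filter, mem_univ, true_and] at hp ⊢
      intro h0
      apply hb
      rw [← hp]
      have : p.1 = -p.2 := by linear_combination h0
      rw [this]; ring
    · intro d hd
      simp only [mem_filter, mem_univ, true_and] at hd ⊢
      field_simp
      ring
    · intro p hp
      simp only [mem_filter, mem_univ, true_and] at hp
      have hd : p.1 + p.2 ≠ 0 := by
        intro h0
        apply hb; rw [← hp]
        have : p.1 = -p.2 := by linear_combination h0
        rw [this]; ring
      have hbd : b / (p.1 + p.2) = p.1 - p.2 := by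
        field_simp
        linear_combination -hp
      ext <;> simp only [hbd] <;> field_simp <;> ring
    · intro d hd
      simp only [mem_filter, mem_univ, true_and] at hd
      field_simp
      ring
  rw [this, Finset.filter_ne' univ 0, Finset.card_erase_of_mem (mem_univ 0), Finset.card_univ]

-- generic fiberwise card over pairs
lemma aux_fiberwise (P : F × F → Prop) [DecidablePred P] :
    (univ.filter P).card = ∑ x : F, (univ.filter fun y : F => P (x, y)).card := by
  rw [Finset.card_eq_sum_card_fiberwise (f := Prod.fst) (t := univ) (fun p _ => mem_univ _)]
  refine Finset.sum_congr rfl fun x _ => ?_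
  apply Finset.card_bij' (fun p _ => p.2) (fun y _ => (x, y))
  case hi =>
    intro p hp
    simp only [mem_filter, mem_univ, true_and] at hp ⊢
    obtain ⟨h1, h2⟩ := hp
    rw [← h2]
    simpa using h1
  case hj =>
    intro y hy
    simp only [mem_filter, mem_univ, true_and] at hy ⊢
    exact ⟨hy, trivial⟩
  case left_inv =>
    intro p hp
    simp only [mem_filter, mem_univ, true_and] at hp
    rw [← hp.2]
  case right_inv =>
    intro y hy
    rfl

-- L3
lemma aux_char_sum (hchar : ringChar F ≠ 2) {b : F} (hb : b ≠ 0) :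
    ∑ x : F, quadraticChar F (x * x - b) = -1 := by
  have key : ((univ.filter fun p : F × F => p.1 * p.1 - p.2 * p.2 = b).card : ℤ)
      = ∑ x : F, ((univ.filter fun y : F => y * y = x * x - b).card : ℤ) := by
    rw [aux_fiberwise (fun p : F × F => p.1 * p.1 - p.2 * p.2 = b)]
    push_cast
    refine Finset.sum_congr rfl fun x _ => ?_
    rw [show (univ.filter fun y : F => x * x - y * y = b)
        = (univ.filter fun y : F => y * y = x * x - b) from
      Finset.filter_congr fun y _ => by
        constructor
        · intro h; linear_combination -h
        · intro h; linear_combination -h]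
  rw [aux_hyperbola_count hchar hb] at key
  have hf : (1 : ℕ) ≤ Fintype.card F := Fintype.card_pos
  have key2 : ∑ x : F, (quadraticChar F (x * x - b) + 1)
      = ((Fintype.card F - 1 : ℕ) : ℤ) := by
    rw [key]
    exact Finset.sum_congr rfl fun x _ => (aux_sqrt_count hchar _).symm
  rw [Nat.cast_sub hf, Nat.cast_one] at key2
  rw [Finset.sum_add_distrib, Finset.sum_const, Finset.card_univ, nsmul_eq_mul, mul_one] at key2
  linarith

-- L4
lemma aux_char_sum2 (hchar : ringChar F ≠ 2) {α c : F} (hα : α ≠ 0) (hc : c ≠ 0) :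
    ∑ x : F, quadraticChar F (c - α * (x * x)) = -(quadraticChar F (-α)) := by
  have h : ∀ x : F, c - α * (x * x) = (-α) * (x * x - c * α⁻¹) := by
    intro x; field_simp; ring
  simp_rw [h, map_mul, ← Finset.mul_sum,
    aux_char_sum hchar (by simp [hc, hα] : c * α⁻¹ ≠ 0), mul_neg_one]

-- L5
lemma aux_fiber_count (hchar : ringChar F ≠ 2) {α β : F} (hα : α ≠ 0) (hβ : β ≠ 0)
    {c : F} (hc : c ≠ 0) :
    ((univ.filter fun v : F × F => α * v.1 * v.1 + β * v.2 * v.2 = c).card : ℤ)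
      = Fintype.card F - quadraticChar F (-(α * β)) := by
  rw [aux_fiberwise (fun v : F × F => α * v.1 * v.1 + β * v.2 * v.2 = c)]
  have h : ∀ x : F, (univ.filter fun y : F => α * x * x + β * y * y = c)
      = (univ.filter fun y : F => y * y = (c - α * (x * x)) * β⁻¹) := by
    intro x
    refine Finset.filter_congr fun y _ => ?_
    rw [← div_eq_mul_inv, eq_div_iff hβ]
    constructor
    · intro h; linear_combination h
    · intro h; linear_combination h
  push_cast
  simp_rw [h]
  calc ∑ x : F, ((univ.filter fun y : F => y * y = (c - α * (x * x)) * β⁻¹).card : ℤ)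
      = ∑ x : F, (quadraticChar F ((c - α * (x * x)) * β⁻¹) + 1) :=
        Finset.sum_congr rfl fun x _ => aux_sqrt_count hchar _
    _ = (quadraticChar F β⁻¹) * (∑ x : F, quadraticChar F (c - α * (x * x)))
          + Fintype.card F := by
        rw [Finset.sum_add_distrib, Finset.sum_const, Finset.card_univ, nsmul_eq_mul, mul_one]
        rw [Finset.mul_sum]
        congr 1
        refine Finset.sum_congr rfl fun x _ => ?_
        rw [map_mul, mul_comm]
    _ = Fintype.card F - quadraticChar F (-(α * β)) := by
        rw [aux_char_sum2 hchar hα hc]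
        have hχ : quadraticChar F (-(α * β))
            = quadraticChar F β⁻¹ * quadraticChar F (-α) := by
          have hββ : -(α * β) = β⁻¹ * -α * β ^ 2 := by field_simp
          rw [hββ, map_mul, quadraticChar_sq_one' hβ, mul_one, map_mul]
        rw [hχ]; ring

lemma aux_G_count (hchar : ringChar F ≠ 2) {α β a : F} (hα : α ≠ 0) (hβ : β ≠ 0)
    (ha : a ≠ 0) :
    2 * ((univ.filter fun c : F => ∃ t : F, t * t * (α * β * c) = 4 * a - c).card : ℤ)
      = Fintype.card F - quadraticChar F (-(α * β)) := by
  have h2 : (2 : F) ≠ 0 := Ring.two_ne_zero hchar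
  have h4 : (4 : F) ≠ 0 := by
    intro h
    apply h2
    have : (4 : F) = 2 * 2 := by norm_num
    rw [this] at h
    rcases mul_eq_zero.mp h with h' | h' <;> exact h'
  have h4a : 4 * a ≠ 0 := mul_ne_zero h4 ha
  set g : F → ℤ := fun c => quadraticChar F (α * β * (c * (4 * a - c))) with hg
  -- predicate equivalence
  have hpred : ∀ c : F, (∃ t : F, t * t * (α * β * c) = 4 * a - c) ↔
      (c = 4 * a ∨ g c = 1) := by
    intro c
    constructor
    · rintro ⟨t, ht⟩
      have hc0 : c ≠ 0 := by
        rintro rfl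
        apply h4a
        rw [← sub_zero (4 * a), ← ht]; ring
      by_cases hc4 : c = 4 * a
      · exact Or.inl hc4
      · right
        have hv : α * β * (c * (4 * a - c)) ≠ 0 :=
          mul_ne_zero (mul_ne_zero hα hβ) (mul_ne_zero hc0 (sub_ne_zero.mpr (Ne.symm hc4)))
        rw [hg]
        rw [quadraticChar_one_iff_isSquare hv]
        exact ⟨t * (α * β * c), by rw [← ht]; ring⟩
    · rintro (rfl | hχ)
      · exact ⟨0, by ring⟩
      · have hv : α * β * (c * (4 * a - c)) ≠ 0 := by
          intro h
          rw [hg] at hχ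
          simp only [h] at hχ
          rw [quadraticChar_eq_zero_iff.mpr rfl] at hχ
          norm_num at hχ
        have hc0 : c ≠ 0 := by rintro rfl; exact hv (by ring)
        rw [hg, quadraticChar_one_iff_isSquare hv] at hχ
        obtain ⟨r, hr⟩ := hχ
        refine ⟨r / (α * β * c), ?_⟩
        field_simp
        linear_combination -hr
  -- trichotomy facts
  have htri : ∀ c : F, g c = 0 ∨ g c = 1 ∨ g c = -1 := by
    intro c
    by_cases hv : α * β * (c * (4 * a - c)) = 0
    · left; rw [hg]; exact quadraticChar_eq_zero_iff.mpr hv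
    · right; exact quadraticChar_dichotomy hv
  -- zeros are exactly {0, 4a}
  have hC : (univ.filter fun c : F => g c = 0) = ({0, 4 * a} : Finset F) := by
    ext c
    simp only [mem_filter, mem_univ, true_and, mem_insert, mem_singleton, hg,
      quadraticChar_eq_zero_iff]
    constructor
    · intro h
      rcases mul_eq_zero.mp h with h' | h'
      · exact absurd h' (mul_ne_zero hα hβ)
      · rcases mul_eq_zero.mp h' with h'' | h''
        · exact Or.inl h''
        · right; linear_combination -h''
    · rintro (rfl | rfl) <;> ring_nf <;> simp
  have hCcard : (univ.filter fun c : F => g c = 0).card = 2 := by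
    rw [hC]
    rw [Finset.card_insert_of_notMem (by simp [Ne.symm h4a]), Finset.card_singleton]
  -- sum of g
  have hsum : ∑ c : F, g c = -(quadraticChar F (-(α * β))) := by
    have hval : ∀ c : F, g c
        = quadraticChar F (-(α * β)) * quadraticChar F ((c - 2 * a) * (c - 2 * a) - (2 * a) * (2 * a)) := by
      intro c
      rw [hg, ← map_mul]
      congr 1
      ring
    simp_rw [hval, ← Finset.mul_sum]
    have hre : ∑ c : F, quadraticChar F ((c - 2 * a) * (c - 2 * a) - (2 * a) * (2 * a))
        = ∑ x : F, quadraticChar F (x * x - (2 * a) * (2 * a)) :=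
      Fintype.sum_equiv (Equiv.subRight (2 * a)) _ _ (fun c => rfl)
    rw [hre, aux_char_sum hchar (mul_ne_zero (mul_ne_zero h2 ha) (mul_ne_zero h2 ha)), mul_neg_one]
  -- counting: A - B and A + B
  set A := (univ.filter fun c : F => g c = 1) with hA
  set B := (univ.filter fun c : F => g c = -1) with hB
  have hAB1 : (A.card : ℤ) - B.card = -(quadraticChar F (-(α * β))) := by
    rw [← hsum]
    have : ∀ c : F, g c = (if g c = 1 then (1 : ℤ) else 0) - (if g c = -1 then (1 : ℤ) else 0) := by
      intro c
      rcases htri c with h | h | h <;> rw [h] <;> norm_num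
    rw [Finset.sum_congr rfl fun c _ => this c, Finset.sum_sub_distrib]
    simp [hA, hB, Finset.sum_boole]
  have hAB2 : (A.card : ℤ) + B.card + 2 = Fintype.card F := by
    have : ∀ c : F, (if g c = 1 then (1 : ℤ) else 0) + (if g c = -1 then (1 : ℤ) else 0)
        + (if g c = 0 then (1 : ℤ) else 0) = 1 := by
      intro c
      rcases htri c with h | h | h <;> rw [h] <;> norm_num
    have hsum1 : ∑ c : F, ((if g c = 1 then (1 : ℤ) else 0) + (if g c = -1 then (1 : ℤ) else 0)
        + (if g c = 0 then (1 : ℤ) else 0)) = Fintype.card F := by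
      rw [Finset.sum_congr rfl fun c _ => this c, Finset.sum_const, Finset.card_univ,
        nsmul_eq_mul, mul_one]
    rw [Finset.sum_add_distrib, Finset.sum_add_distrib] at hsum1
    simp only [Finset.sum_boole] at hsum1
    rw [← hsum1, ← hA, ← hB, hCcard]
    push_cast
    ring
  -- the filter set is insert (4a) A
  have hset : (univ.filter fun c : F => ∃ t : F, t * t * (α * β * c) = 4 * a - c)
      = insert (4 * a) A := by
    ext c
    simp only [mem_filter, mem_univ, true_and, mem_insert, hA]
    rw [hpred c]
  have h4anotA : 4 * a ∉ A := by
    rw [hA]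
    simp only [mem_filter, mem_univ, true_and, hg]
    intro h
    rw [show α * β * (4 * a * (4 * a - 4 * a)) = 0 by ring, quadraticChar_eq_zero_iff.mpr rfl] at h
    norm_num at h
  rw [hset, Finset.card_insert_of_notMem h4anotA]
  push_cast
  linarith

lemma aux_core (hchar : ringChar F ≠ 2) {α β a : F} (hα : α ≠ 0) (hβ : β ≠ 0)
    (ha : a ≠ 0) :
    2 * ((Set.ncard {w : F × F | ∃ u v : F × F,
        (α * u.1 * u.1 + β * u.2 * u.2 = a) ∧ (α * v.1 * v.1 + β * v.2 * v.2 = a)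
        ∧ w = u + v}) : ℤ)
      = ((Fintype.card F : ℤ) - quadraticChar F (-(α * β))) ^ 2 + 2 := by
  have h2 : (2 : F) ≠ 0 := Ring.two_ne_zero hchar
  have h4 : (4 : F) ≠ 0 := by
    intro h
    apply h2
    have h' : (4 : F) = 2 * 2 := by norm_num
    rw [h'] at h
    rcases mul_eq_zero.mp h with h'' | h'' <;> exact h''
  have h4a : 4 * a ≠ 0 := mul_ne_zero h4 ha
  set T : Finset (F × F) := insert 0 (univ.filter fun w : F × F =>
      ∃ t : F, t * t * (α * β * (α * w.1 * w.1 + β * w.2 * w.2))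
        = 4 * a - (α * w.1 * w.1 + β * w.2 * w.2)) with hT
  -- the sumset equals T
  have hST : {w : F × F | ∃ u v : F × F,
      (α * u.1 * u.1 + β * u.2 * u.2 = a) ∧ (α * v.1 * v.1 + β * v.2 * v.2 = a)
      ∧ w = u + v} = (T : Set (F × F)) := by
    ext w
    rw [hT]
    simp only [Set.mem_setOf_eq, coe_insert, Set.mem_insert_iff, coe_filter, mem_univ,
      true_and]
    constructor
    · rintro ⟨u, v, hu, hv, rfl⟩
      by_cases hw0 : u + v = 0
      · exact Or.inl hw0
      · right
        obtain ⟨u1, u2⟩ := u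
        obtain ⟨v1, v2⟩ := v
        simp only [Prod.fst_add, Prod.snd_add] at *
        have hperp : α * (u1 + v1) * ((u1 - v1) / 2) + β * (u2 + v2) * ((u2 - v2) / 2) = 0 := by
          field_simp
          linear_combination hu - hv
        have hz4 : 4 * (α * ((u1 - v1) / 2) * ((u1 - v1) / 2)
              + β * ((u2 - v2) / 2) * ((u2 - v2) / 2))
            = 4 * a - (α * (u1 + v1) * (u1 + v1) + β * (u2 + v2) * (u2 + v2)) := by
          field_simp
          linear_combination 8 * hu + 8 * hv
        set z1 := (u1 - v1) / 2 with hz1def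
        set z2 := (u2 - v2) / 2 with hz2def
        set w1 := u1 + v1 with hw1def
        set w2 := u2 + v2 with hw2def
        by_cases hw1 : w1 ≠ 0
        · refine ⟨-(2 * z2) / (α * w1), ?_⟩
          rw [← hz4]
          have hz1 : z1 = -(β * w2 * z2) / (α * w1) := by
            field_simp
            linear_combination hperp
          rw [hz1]
          field_simp
          ring
        · push_neg at hw1
          have hw2 : w2 ≠ 0 := by
            intro hw2'
            apply hw0
            refine Prod.ext ?_ ?_ <;>
              simp only [Prod.fst_add, Prod.snd_add, Prod.fst_zero, Prod.snd_zero]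
            · rw [← hw1def]; exact hw1
            · rw [← hw2def]; exact hw2'
          have hz2 : z2 = 0 := by
            rw [hw1] at hperp
            have hb : β * w2 * z2 = 0 := by linear_combination hperp
            rcases mul_eq_zero.mp hb with h' | h'
            · exact absurd h' (mul_ne_zero hβ hw2)
            · exact h'
          refine ⟨2 * z1 / (β * w2), ?_⟩
          rw [← hz4, hz2, hw1]
          field_simp
          ring
    · rintro (rfl | hmem)
      · -- 0 is in the sumset
        have hpos : (0 : ℤ) < ((univ.filter fun v : F × F =>
            α * v.1 * v.1 + β * v.2 * v.2 = a).card : ℤ) := by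
          rw [aux_fiber_count hchar hα hβ ha]
          have hf : 2 ≤ Fintype.card F := Fintype.one_lt_card
          have hχ : quadraticChar F (-(α * β)) = 1 ∨ quadraticChar F (-(α * β)) = -1 :=
            quadraticChar_dichotomy (neg_ne_zero.mpr (mul_ne_zero hα hβ))
          rcases hχ with h | h <;> rw [h] <;> push_cast <;> linarith
        have hne : (univ.filter fun v : F × F =>
            α * v.1 * v.1 + β * v.2 * v.2 = a).Nonempty := by
          rw [← Finset.card_pos]
          exact_mod_cast hpos
        obtain ⟨u, hu⟩ := hne
        simp only [mem_filter, mem_univ, true_and] at hu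
        refine ⟨u, -u, hu, ?_, ?_⟩
        · simp only [Prod.fst_neg, Prod.snd_neg]
          linear_combination hu
        · simp
      · obtain ⟨t, ht⟩ := hmem
        obtain ⟨w1, w2⟩ := w
        simp only at ht
        refine ⟨(w1 / 2 + t * β * w2 / 2, w2 / 2 - t * α * w1 / 2),
          (w1 / 2 - t * β * w2 / 2, w2 / 2 + t * α * w1 / 2), ?_, ?_, ?_⟩
        · simp only
          field_simp
          linear_combination ht
        · simp only
          field_simp
          linear_combination ht
        · refine Prod.ext ?_ ?_ <;> simp only [Prod.fst_add, Prod.snd_add] <;>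
            field_simp <;> ring
  rw [hST, Set.ncard_coe_finset, hT]
  have h0T : (0 : F × F) ∉ (univ.filter fun w : F × F =>
      ∃ t : F, t * t * (α * β * (α * w.1 * w.1 + β * w.2 * w.2))
        = 4 * a - (α * w.1 * w.1 + β * w.2 * w.2)) := by
    simp only [mem_filter, mem_univ, true_and]
    rintro ⟨t, ht⟩
    apply h4a
    simp only [Prod.fst_zero, Prod.snd_zero] at ht
    linear_combination -ht
  rw [Finset.card_insert_of_notMem h0T]
  -- fiberwise count over values of Q
  set G : Finset F := univ.filter fun c : F => ∃ t : F, t * t * (α * β * c) = 4 * a - c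
    with hG
  have hfib : (univ.filter fun w : F × F =>
      ∃ t : F, t * t * (α * β * (α * w.1 * w.1 + β * w.2 * w.2))
        = 4 * a - (α * w.1 * w.1 + β * w.2 * w.2)).card
      = ∑ c ∈ G, (univ.filter fun w : F × F =>
          α * w.1 * w.1 + β * w.2 * w.2 = c).card := by
    rw [Finset.card_eq_sum_card_fiberwise
      (f := fun w : F × F => α * w.1 * w.1 + β * w.2 * w.2) (t := G) ?_]
    · refine Finset.sum_congr rfl fun c hc => ?_
      congr 1
      rw [Finset.filter_filter]
      ext w
      simp only [mem_filter, mem_univ, true_and]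
      rw [hG] at hc
      simp only [mem_filter, mem_univ, true_and] at hc
      constructor
      · rintro ⟨-, h⟩; exact h
      · rintro h
        refine ⟨?_, h⟩
        rw [h]
        exact hc
    · intro w hw
      simp only [mem_coe, mem_filter, mem_univ, true_and] at hw
      rw [hG]
      simp only [mem_coe, mem_filter, mem_univ, true_and]
      exact hw
  rw [hfib]
  have hGc0 : ∀ c ∈ G, c ≠ 0 := by
    intro c hc
    rw [hG] at hc
    simp only [mem_filter, mem_univ, true_and] at hc
    rintro rfl
    obtain ⟨t, ht⟩ := hc
    apply h4a
    rw [← sub_zero (4 * a), ← ht]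
    ring
  have hsum : (∑ c ∈ G, (univ.filter fun w : F × F =>
      α * w.1 * w.1 + β * w.2 * w.2 = c).card : ℤ)
      = G.card * ((Fintype.card F : ℤ) - quadraticChar F (-(α * β))) := by
    push_cast
    rw [Finset.sum_congr rfl fun c hc => aux_fiber_count hchar hα hβ (hGc0 c hc)]
    rw [Finset.sum_const, nsmul_eq_mul]
  have hGcard := aux_G_count hchar hα hβ ha (F := F)
  rw [← hG] at hGcard
  push_cast
  push_cast at hsum
  rw [hsum]
  nlinarith [hGcard]

end AuxCounting

open Finset in
/-- Over a finite field of odd characteristic with `f` elements, for a 2-dimensional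
non-degenerate quadratic form `q` and `a ≠ 0`, the sumset `V_a + V_a` has cardinality
`k²/2 + 1` where `k = f + 1` if `q` is anisotropic and `k = f - 1` if `q` is isotropic. -/
theorem stmt_10 {F V : Type*} [Field F] [Fintype F] (hchar : ringChar F ≠ 2)
    [AddCommGroup V] [Module F V]
    (q : QuadraticForm F V) (hdim : Module.finrank F V = 2)
    (hnd : ∀ x : V, (∀ y : V, polar (⇑q) x y = 0) → x = 0)
    (a : F) (ha : a ≠ 0) :
    ((∀ v : V, q v = 0 → v = 0) →
      Set.ncard {w : V | ∃ u v : V, q u = a ∧ q v = a ∧ w = u + v} =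
        (Fintype.card F + 1) ^ 2 / 2 + 1) ∧
    ((∃ v : V, v ≠ 0 ∧ q v = 0) →
      Set.ncard {w : V | ∃ u v : V, q u = a ∧ q v = a ∧ w = u + v} =
        (Fintype.card F - 1) ^ 2 / 2 + 1) := by
  letI := Classical.decEq F
  have h2 : (2 : F) ≠ 0 := Ring.two_ne_zero hchar
  haveI : Invertible (2 : F) := invertibleOfNonzero h2
  haveI : FiniteDimensional F V := FiniteDimensional.of_finrank_eq_succ hdim
  obtain ⟨w, ⟨e⟩⟩ := QuadraticForm.equivalent_weightedSumSquares q
  set i0 : Fin (finrank F V) := (finCongr hdim).symm 0 with hi0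
  set i1 : Fin (finrank F V) := (finCongr hdim).symm 1 with hi1
  have hne01 : i1 ≠ i0 := by
    rw [hi0, hi1]
    intro h
    exact absurd ((finCongr hdim).symm.injective h) (by decide)
  set α : F := w i0 with hαdef
  set β : F := w i1 with hβdef
  set Φ : V ≃ (F × F) := e.toLinearEquiv.toEquiv.trans
    ((Equiv.arrowCongr (finCongr hdim) (Equiv.refl F)).trans (finTwoArrowEquiv F)) with hΦdef
  have hΦ : ∀ x : V, Φ x = (e x i0, e x i1) := fun x => rfl
  have hΦadd : ∀ x y : V, Φ (x + y) = Φ x + Φ y := by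
    intro x y
    rw [hΦ, hΦ, hΦ]
    have : e (x + y) = e x + e y := map_add e.toLinearEquiv x y
    rw [this]
    rfl
  have hΦ0 : Φ (0 : V) = 0 := by
    rw [hΦ]
    have : e (0 : V) = 0 := map_zero e.toLinearEquiv
    rw [this]
    rfl
  have hQE : ∀ x : V, q x = α * (Φ x).1 * (Φ x).1 + β * (Φ x).2 * (Φ x).2 := by
    intro x
    rw [← e.map_app x, QuadraticMap.weightedSumSquares_apply]
    have hsum : ∑ i : Fin (finrank F V), w i • (e x i * e x i)
        = ∑ j : Fin 2, w ((finCongr hdim).symm j)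
            • (e x ((finCongr hdim).symm j) * e x ((finCongr hdim).symm j)) :=
      (Fintype.sum_equiv (finCongr hdim).symm _ _ (fun j => rfl)).symm
    rw [hsum, Fin.sum_univ_two, hΦ]
    simp only [smul_eq_mul, ← hi0, ← hi1, ← hαdef, ← hβdef]
    ring
  -- α, β nonzero
  have hαβ : α ≠ 0 ∧ β ≠ 0 := by
    constructor
    · intro hα0
      have hx := hnd (Φ.symm (1, 0)) ?_
      · have : ((1 : F), (0 : F)) = Φ (0 : V) := by rw [← hx, Equiv.apply_symm_apply]
        rw [hΦ0] at this
        exact one_ne_zero (congrArg Prod.fst this)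
      · intro y
        simp only [QuadraticMap.polar]
        rw [hQE, hQE, hQE, hΦadd, Equiv.apply_symm_apply]
        simp only [Prod.fst_add, Prod.snd_add]
        rw [hα0]
        ring
    · intro hβ0
      have hx := hnd (Φ.symm (0, 1)) ?_
      · have : ((0 : F), (1 : F)) = Φ (0 : V) := by rw [← hx, Equiv.apply_symm_apply]
        rw [hΦ0] at this
        exact one_ne_zero (congrArg Prod.snd this)
      · intro y
        simp only [QuadraticMap.polar]
        rw [hQE, hQE, hQE, hΦadd, Equiv.apply_symm_apply]
        simp only [Prod.fst_add, Prod.snd_add]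
        rw [hβ0]
        ring
  obtain ⟨hα, hβ⟩ := hαβ
  -- transport the sumset
  have hset : {w : V | ∃ u v : V, q u = a ∧ q v = a ∧ w = u + v}
      = Φ ⁻¹' {p : F × F | ∃ u v : F × F,
          (α * u.1 * u.1 + β * u.2 * u.2 = a) ∧ (α * v.1 * v.1 + β * v.2 * v.2 = a)
          ∧ p = u + v} := by
    ext x
    simp only [Set.mem_setOf_eq, Set.mem_preimage]
    constructor
    · rintro ⟨u, v, hu, hv, rfl⟩
      exact ⟨Φ u, Φ v, by rw [← hQE]; exact hu, by rw [← hQE]; exact hv, hΦadd u v⟩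
    · rintro ⟨p1, p2, h1, h2, hx⟩
      refine ⟨Φ.symm p1, Φ.symm p2, ?_, ?_, ?_⟩
      · rw [hQE, Equiv.apply_symm_apply]; exact h1
      · rw [hQE, Equiv.apply_symm_apply]; exact h2
      · apply Φ.injective
        rw [hΦadd, Equiv.apply_symm_apply, Equiv.apply_symm_apply]
        exact hx
  have hncard : Set.ncard {w : V | ∃ u v : V, q u = a ∧ q v = a ∧ w = u + v}
      = Set.ncard {p : F × F | ∃ u v : F × F,
          (α * u.1 * u.1 + β * u.2 * u.2 = a) ∧ (α * v.1 * v.1 + β * v.2 * v.2 = a)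
          ∧ p = u + v} := by
    rw [hset, ← Equiv.image_symm_eq_preimage]
    exact Set.ncard_image_of_injective _ Φ.symm.injective
  have hcore := aux_core hchar hα hβ ha
  have hf1 : 1 ≤ Fintype.card F := Fintype.card_pos
  have hodd : Fintype.card F % 2 = 1 := FiniteField.odd_card_of_char_ne_two hchar
  constructor
  · -- anisotropic
    intro haniso
    have hns : ¬IsSquare (-(α * β)) := by
      rintro ⟨r, hr⟩
      have hp : q (Φ.symm (r, α)) = 0 := by
        rw [hQE, Equiv.apply_symm_apply]
        show α * r * r + β * α * α = 0
        linear_combination -α * hr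
      have := haniso _ hp
      have h0 : ((r : F), α) = Φ (0 : V) := by rw [← this, Equiv.apply_symm_apply]
      rw [hΦ0] at h0
      exact hα (congrArg Prod.snd h0)
    have hε : quadraticChar F (-(α * β)) = -1 :=
      quadraticChar_neg_one_iff_not_isSquare.mpr hns
    rw [hε] at hcore
    rw [hncard]
    have hZ : 2 * (Set.ncard {p : F × F | ∃ u v : F × F,
        (α * u.1 * u.1 + β * u.2 * u.2 = a) ∧ (α * v.1 * v.1 + β * v.2 * v.2 = a)
        ∧ p = u + v} : ℤ) = ((Fintype.card F : ℤ) + 1) ^ 2 + 2 := by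
      rw [hcore]; ring
    have hN : 2 * Set.ncard {p : F × F | ∃ u v : F × F,
        (α * u.1 * u.1 + β * u.2 * u.2 = a) ∧ (α * v.1 * v.1 + β * v.2 * v.2 = a)
        ∧ p = u + v} = (Fintype.card F + 1) ^ 2 + 2 := by exact_mod_cast hZ
    obtain ⟨k, hk⟩ : ∃ k, Fintype.card F + 1 = 2 * k := ⟨(Fintype.card F + 1) / 2, by omega⟩
    rw [hk] at hN ⊢
    have hp2 : (2 * k) ^ 2 = 2 * (2 * (k * k)) := by ring
    rw [hp2] at hN ⊢
    set m := k * k with hm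
    omega
  · -- isotropic
    rintro ⟨v0, hv0ne, hv0⟩
    have hsq : IsSquare (-(α * β)) := by
      have hp : α * (Φ v0).1 * (Φ v0).1 + β * (Φ v0).2 * (Φ v0).2 = 0 := by
        rw [← hQE]; exact hv0
      have hΦv0 : Φ v0 ≠ 0 := by
        intro h
        apply hv0ne
        apply Φ.injective
        rw [h, hΦ0]
      by_cases hy : (Φ v0).2 = 0
      · exfalso
        have hx : (Φ v0).1 ≠ 0 := by
          intro hx
          apply hΦv0
          exact Prod.ext hx hy
        rw [hy] at hp
        apply hα
        have : α * (Φ v0).1 * (Φ v0).1 = 0 := by linear_combination hp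
        rcases mul_eq_zero.mp this with h' | h'
        · rcases mul_eq_zero.mp h' with h'' | h''
          · exact h''
          · exact absurd h'' hx
        · exact absurd h' hx
      · refine ⟨α * (Φ v0).1 / (Φ v0).2, ?_⟩
        field_simp
        linear_combination -hp
    have hε : quadraticChar F (-(α * β)) = 1 :=
      (quadraticChar_one_iff_isSquare (neg_ne_zero.mpr (mul_ne_zero hα hβ))).mpr hsq
    rw [hε] at hcore
    rw [hncard]
    have hZ : 2 * (Set.ncard {p : F × F | ∃ u v : F × F,
        (α * u.1 * u.1 + β * u.2 * u.2 = a) ∧ (α * v.1 * v.1 + β * v.2 * v.2 = a)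
        ∧ p = u + v} : ℤ) = ((Fintype.card F - 1 : ℕ) : ℤ) ^ 2 + 2 := by
      rw [hcore]
      have : ((Fintype.card F - 1 : ℕ) : ℤ) = (Fintype.card F : ℤ) - 1 := by
        push_cast [hf1]
        ring
      rw [this]
    have hN : 2 * Set.ncard {p : F × F | ∃ u v : F × F,
        (α * u.1 * u.1 + β * u.2 * u.2 = a) ∧ (α * v.1 * v.1 + β * v.2 * v.2 = a)
        ∧ p = u + v} = (Fintype.card F - 1) ^ 2 + 2 := by exact_mod_cast hZ
    obtain ⟨k, hk⟩ : ∃ k, Fintype.card F - 1 = 2 * k := ⟨(Fintype.card F - 1) / 2, by omega⟩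
    rw [hk] at hN ⊢
    have hp2 : (2 * k) ^ 2 = 2 * (2 * (k * k)) := by ring
    rw [hp2] at hN ⊢
    set m := k * k with hm
    omega
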